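/- Let G = (V, E) be a finite simple graph with m = |E| > 0 edges, adjacency indicator A(u,v) ∈ {0,1}, and degrees d_u. Set λ = 1/(2m) and define the degree-weighted LambdaCC objective of a partition C of V (with δ(u,v) = 1 if u and v lie in the same cluster of C and δ(u,v) = 0 otherwise) as Obj(C) = Σ over unordered pairs {u,v} with {u,v} ∈ E and 1 − λ d_u d_v ≥ 0 of (1 − λ d_u d_v)(1 − δ(u,v)), plus Σ over unordered pairs {u,v} with {u,v} ∈ E and 1 − λ d_u d_v < 0 of (λ d_u d_v − 1)·δ(u,v), plus Σ over unordered pairs {u,v} ∉ E with u ≠ v of λ d_u d_v · δ(u,v). Then a partition C minimizes Obj if and only if C maximizes M(C) = Σ over unordered pairs {u,v} with u ≠ v of (A(u,v) − d_u d_v/(2m))·δ(u,v); that is, degree-weighted LambdaCC with λ = 1/(2m) is equivalent to modularity maximization. -/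

import Mathlib

open Finset

/-- **Degree-weighted LambdaCC with `λ = 1/(2m)` is equivalent to modularity.**
Clusterings are represented by label functions `f : V → ℕ` (two vertices are
co-clustered iff they receive the same label); `δ(u,v) = 1` iff `f u = f v`.
Sums over unordered pairs are realized as half the sum over ordered pairs of
distinct vertices.  A clustering minimizes the degree-weighted LambdaCC
objective `Obj` iff it maximizes the modularity-type quantity
`M(C) = Σ_{u<v} (A(u,v) − d_u d_v/(2m)) δ(u,v)`. -/
theorem lambdaCC_modularity_equivalence
    {V : Type*} [Fintype V] [DecidableEq V] (G : SimpleGraph V) [DecidableRel G.Adj]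
    (m : ℕ) (hm : m = G.edgeFinset.card) (hm0 : 0 < m)
    (lam : ℝ) (hlam : lam = 1 / (2 * (m : ℝ)))
    (Obj M : (V → ℕ) → ℝ)
    (hObj : ∀ f : V → ℕ, Obj f = (∑ p ∈ Finset.univ.offDiag (α := V),
        (if G.Adj p.1 p.2 then
          (if 0 ≤ 1 - lam * (G.degree p.1 : ℝ) * (G.degree p.2 : ℝ) then
            (1 - lam * (G.degree p.1 : ℝ) * (G.degree p.2 : ℝ)) *
              (if f p.1 = f p.2 then 0 else 1)
          else
            (lam * (G.degree p.1 : ℝ) * (G.degree p.2 : ℝ) - 1) *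
              (if f p.1 = f p.2 then 1 else 0))
        else
          lam * (G.degree p.1 : ℝ) * (G.degree p.2 : ℝ) *
            (if f p.1 = f p.2 then 1 else 0))) / 2)
    (hM : ∀ f : V → ℕ, M f = (∑ p ∈ Finset.univ.offDiag (α := V),
        ((if G.Adj p.1 p.2 then (1 : ℝ) else 0)
            - (G.degree p.1 : ℝ) * (G.degree p.2 : ℝ) / (2 * (m : ℝ))) *
          (if f p.1 = f p.2 then 1 else 0)) / 2)
    (f : V → ℕ) :
    (∀ g : V → ℕ, Obj f ≤ Obj g) ↔ (∀ g : V → ℕ, M g ≤ M f) := by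
  have key : ∀ h : V → ℕ, Obj h + M h = (∑ p ∈ Finset.univ.offDiag (α := V),
      (if G.Adj p.1 p.2 ∧ 0 ≤ 1 - lam * (G.degree p.1 : ℝ) * (G.degree p.2 : ℝ) then
        1 - lam * (G.degree p.1 : ℝ) * (G.degree p.2 : ℝ) else 0)) / 2 := by
    intro h
    rw [hObj, hM, ← add_div, ← Finset.sum_add_distrib]
    congr 1
    apply Finset.sum_congr rfl
    intro p _
    have hdd : (G.degree p.1 : ℝ) * (G.degree p.2 : ℝ) / (2 * (m : ℝ))
        = lam * (G.degree p.1 : ℝ) * (G.degree p.2 : ℝ) := by rw [hlam]; ring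
    rw [hdd]
    by_cases ha : G.Adj p.1 p.2 <;>
      by_cases hs : 0 ≤ 1 - lam * (G.degree p.1 : ℝ) * (G.degree p.2 : ℝ) <;>
      by_cases hd : h p.1 = h p.2 <;>
      simp [ha, hs, hd] <;> ring
  constructor
  · intro H g
    have h1 := key f
    have h2 := key g
    have := H g
    linarith
  · intro H g
    have h1 := key f
    have h2 := key g
    have := H g
    linarith
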